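/- The sequence n ↦ F_n / ((φ^{log₂ 3}/√5)·m_n^{log₂ φ}) tends to 1 as n → ∞. -/

import Mathlib

/-- `F_n / ((φ^(log₂ 3)/√5)·m_n^(log₂ φ)) → 1` as `n → ∞`. -/
theorem fib_div_power_tendsto_one
    (M : ℕ → ℝ) (hM : ∀ n : ℕ, M n = (2 ^ n - (-1) ^ n) / 3) :
    Filter.Tendsto
      (fun n : ℕ => (Nat.fib n : ℝ) /
        ((((1 + Real.sqrt 5) / 2) ^ (Real.logb 2 3) / Real.sqrt 5)
          * M n ^ (Real.logb 2 ((1 + Real.sqrt 5) / 2))))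
      Filter.atTop (nhds 1) := by
  have sqrt5_pos : 0 < Real.sqrt 5 := Real.sqrt_pos.mpr (by norm_num)
  have h5 : Real.sqrt 5 ^ 2 = 5 := Real.sq_sqrt (by norm_num)
  have h5lb : 2 < Real.sqrt 5 := by nlinarith
  have h5ub : Real.sqrt 5 < 3 := by nlinarith
  set φ : ℝ := (1 + Real.sqrt 5) / 2 with hφ
  have φpos : 0 < φ := by rw [hφ]; positivity
  set ψ : ℝ := (1 - Real.sqrt 5) / 2 with hψ
  set c : ℝ := Real.logb 2 φ with hc
  have h2c : (2:ℝ) ^ c = φ := Real.rpow_logb (by norm_num) (by norm_num) φpos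
  have gold : ∀ n : ℕ, (Nat.fib n : ℝ) = (φ ^ n - ψ ^ n) / Real.sqrt 5 := by
    intro n
    have := Real.coe_fib_eq n
    simpa [Real.goldenRatio, Real.goldenConj, hφ, hψ] using this
  -- g
  have hgf : ∀ n : ℕ, (Nat.fib n : ℝ) * Real.sqrt 5 / φ ^ n = 1 - (ψ / φ) ^ n := by
    intro n
    rw [gold n, div_pow ψ φ n, div_mul_cancel₀ _ sqrt5_pos.ne', sub_div,
      div_self (pow_ne_zero n φpos.ne')]
  have hr : |ψ / φ| < 1 := by
    rw [abs_lt]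
    constructor
    · rw [neg_lt, ← neg_div, div_lt_one φpos, hφ, hψ]; nlinarith
    · rw [div_lt_one φpos, hφ, hψ]; nlinarith
  have hg : Filter.Tendsto (fun n : ℕ => 1 - (ψ / φ) ^ n) Filter.atTop (nhds 1) := by
    have := tendsto_pow_atTop_nhds_zero_of_abs_lt_one hr
    simpa using Filter.Tendsto.sub (tendsto_const_nhds (x := (1:ℝ))) this
  -- h
  have hinner : Filter.Tendsto (fun n : ℕ => 1 - (-1:ℝ) ^ n / 2 ^ n) Filter.atTop (nhds 1) := by
    have h12 : |(-1/2 : ℝ)| < 1 := by rw [abs_lt]; norm_num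
    have := tendsto_pow_atTop_nhds_zero_of_abs_lt_one h12
    have h2 : Filter.Tendsto (fun n : ℕ => (-1:ℝ) ^ n / 2 ^ n) Filter.atTop (nhds 0) := by
      have he : (fun n : ℕ => (-1:ℝ) ^ n / 2 ^ n) = fun n : ℕ => (-1/2:ℝ) ^ n := by
        funext n; rw [div_pow]
      rw [he]; exact this
    simpa using Filter.Tendsto.sub (tendsto_const_nhds (x := (1:ℝ))) h2
  have hh : Filter.Tendsto (fun n : ℕ => (1 - (-1:ℝ) ^ n / 2 ^ n) ^ c) Filter.atTop (nhds 1) := by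
    have hcont : ContinuousAt (fun x : ℝ => x ^ c) 1 :=
      Real.continuousAt_rpow_const 1 c (Or.inl one_ne_zero)
    have := hcont.tendsto.comp hinner
    simpa [Real.one_rpow, Function.comp_def] using this
  have hq : Filter.Tendsto
      (fun n : ℕ => (1 - (ψ / φ) ^ n) / (1 - (-1:ℝ) ^ n / 2 ^ n) ^ c)
      Filter.atTop (nhds 1) := by
    simpa [Pi.div_def] using hg.div hh one_ne_zero
  refine Filter.Tendsto.congr' ?_ hq
  filter_upwards [Filter.eventually_ge_atTop 1] with n hn
  have hpow2 : (2:ℝ) ≤ 2 ^ n := le_self_pow₀ (by norm_num) (by omega)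
  have hpm : ((-1:ℝ)) ^ n = 1 ∨ ((-1:ℝ)) ^ n = -1 := neg_one_pow_eq_or ℝ n
  have hA : (0:ℝ) < 2 ^ n - (-1) ^ n := by rcases hpm with h | h <;> rw [h] <;> linarith
  have hB : (0:ℝ) < 1 - (-1:ℝ) ^ n / 2 ^ n := by
    have h2n : (0:ℝ) < 2 ^ n := by positivity
    rw [sub_pos, div_lt_one h2n]
    rcases hpm with h | h <;> rw [h] <;> linarith
  have h2n : (0:ℝ) < 2 ^ n := by positivity
  -- key denominator identity
  have key1 : φ ^ Real.logb 2 3 = (3:ℝ) ^ c := by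
    rw [← h2c, ← Real.rpow_mul (by norm_num : (0:ℝ) ≤ 2), mul_comm,
      Real.rpow_mul (by norm_num : (0:ℝ) ≤ 2),
      Real.rpow_logb (by norm_num) (by norm_num) (by norm_num)]
  have hMc : M n ^ c = (2 ^ n - (-1) ^ n : ℝ) ^ c / (3:ℝ) ^ c := by
    rw [hM n, Real.div_rpow hA.le (by norm_num)]
  have hsplit : (2 ^ n - (-1) ^ n : ℝ) = 2 ^ n * (1 - (-1:ℝ) ^ n / 2 ^ n) := by
    field_simp
  have h2nc : ((2:ℝ) ^ n) ^ c = φ ^ n := by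
    rw [← Real.rpow_natCast 2 n, ← Real.rpow_mul (by norm_num : (0:ℝ) ≤ 2), mul_comm,
      Real.rpow_mul (by norm_num : (0:ℝ) ≤ 2), h2c, Real.rpow_natCast]
  have hden : (φ ^ Real.logb 2 3 / Real.sqrt 5) * M n ^ c
      = φ ^ n * (1 - (-1:ℝ) ^ n / 2 ^ n) ^ c / Real.sqrt 5 := by
    rw [key1, hMc, hsplit, Real.mul_rpow h2n.le hB.le, h2nc]
    have h3c : (0:ℝ) < (3:ℝ) ^ c := Real.rpow_pos_of_pos (by norm_num) c
    field_simp
  rw [hden]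
  have hBc : (0:ℝ) < (1 - (-1:ℝ) ^ n / 2 ^ n) ^ c := Real.rpow_pos_of_pos hB c
  rw [← hgf n]
  have hφn : (0:ℝ) < φ ^ n := by positivity
  field_simp
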